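/- The function g(t) = (t - sin t)/sin²(t/2) is strictly increasing on (0, 2π). -/

import Mathlib

open Real Set

noncomputable def hAux (t : ℝ) : ℝ :=
  2 * Real.sin (t / 2) ^ 3 - (t - Real.sin t) * Real.cos (t / 2)

lemma half_hasDerivAt (t : ℝ) : HasDerivAt (fun x : ℝ => x / 2) (1 / 2) t := by
  simpa using (hasDerivAt_id t).div_const 2

lemma sin_half_hasDerivAt (t : ℝ) :
    HasDerivAt (fun x : ℝ => Real.sin (x / 2)) (Real.cos (t / 2) * (1 / 2)) t :=
  by have := (Real.hasDerivAt_sin (t / 2)).comp t (half_hasDerivAt t); exact this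

lemma cos_half_hasDerivAt (t : ℝ) :
    HasDerivAt (fun x : ℝ => Real.cos (x / 2)) (-Real.sin (t / 2) * (1 / 2)) t :=
  by have := (Real.hasDerivAt_cos (t / 2)).comp t (half_hasDerivAt t); exact this

lemma sin_t_eq (t : ℝ) : Real.sin t = 2 * Real.sin (t / 2) * Real.cos (t / 2) := by
  rw [← Real.sin_two_mul]; congr 1; ring

lemma cos_t_eq (t : ℝ) : Real.cos t = 1 - 2 * Real.sin (t / 2) ^ 2 := by
  have h : t = 2 * (t / 2) := by ring
  rw [h, Real.cos_two_mul, Real.cos_sq']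
  ring_nf

lemma hAux_hasDerivAt (t : ℝ) :
    HasDerivAt hAux (Real.sin (t / 2) * (t / 2)) t := by
  have h1 : HasDerivAt (fun x : ℝ => 2 * Real.sin (x / 2) ^ 3)
      (2 * (3 * Real.sin (t / 2) ^ 2 * (Real.cos (t / 2) * (1 / 2)))) t := by
    simpa [mul_comm, mul_assoc, mul_left_comm] using
      (((sin_half_hasDerivAt t).pow 3).const_mul 2)
  have h2 : HasDerivAt (fun x : ℝ => (x - Real.sin x) * Real.cos (x / 2))
      ((1 - Real.cos t) * Real.cos (t / 2) +
        (t - Real.sin t) * (-Real.sin (t / 2) * (1 / 2))) t :=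
    ((hasDerivAt_id t).sub (Real.hasDerivAt_sin t)).mul (cos_half_hasDerivAt t)
  have := h1.sub h2
  refine this.congr_deriv ?_
  rw [cos_t_eq t, sin_t_eq t]
  ring

lemma hAux_pos {t : ℝ} (ht : t ∈ Set.Ioo 0 (2 * π)) : 0 < hAux t := by
  have hmono : StrictMonoOn hAux (Set.Icc 0 (2 * π)) := by
    apply strictMonoOn_of_deriv_pos (convex_Icc _ _)
    · exact fun x _ => (hAux_hasDerivAt x).continuousAt.continuousWithinAt
    · intro x hx
      rw [interior_Icc] at hx
      rw [(hAux_hasDerivAt x).deriv]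
      have hs : 0 < Real.sin (x / 2) := by
        apply Real.sin_pos_of_pos_of_lt_pi <;> [linarith [hx.1]; linarith [hx.2, Real.pi_pos]]
      have := hx.1
      positivity
  have h0 : hAux 0 = 0 := by simp [hAux]
  calc (0:ℝ) = hAux 0 := h0.symm
    _ < hAux t := hmono ⟨le_refl 0, by positivity⟩ ⟨ht.1.le, ht.2.le⟩ ht.1

theorem g_strictMono :
    StrictMonoOn (fun t : ℝ => (t - Real.sin t) / Real.sin (t / 2) ^ 2)
      (Set.Ioo 0 (2 * π)) := by
  apply strictMonoOn_of_deriv_pos (convex_Ioo _ _)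
  · apply ContinuousOn.div
    · fun_prop
    · fun_prop
    · intro x hx
      have hs : 0 < Real.sin (x / 2) :=
        Real.sin_pos_of_pos_of_lt_pi (by linarith [hx.1]) (by linarith [hx.2])
      positivity
  · intro x hx
    rw [interior_Ioo] at hx
    have hs : 0 < Real.sin (x / 2) :=
      Real.sin_pos_of_pos_of_lt_pi (by linarith [hx.1]) (by linarith [hx.2])
    have hnum : HasDerivAt (fun t : ℝ => t - Real.sin t) (1 - Real.cos x) x :=
      (hasDerivAt_id x).sub (Real.hasDerivAt_sin x)
    have hden : HasDerivAt (fun t : ℝ => Real.sin (t / 2) ^ 2)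
        (2 * Real.sin (x / 2) ^ 1 * (Real.cos (x / 2) * (1 / 2))) x :=
      (sin_half_hasDerivAt x).pow 2
    have hdiv := hnum.div hden (by positivity)
    rw [show deriv (fun t : ℝ => (t - Real.sin t) / Real.sin (t / 2) ^ 2) x = _ from hdiv.deriv]
    have key : ((1 - Real.cos x) * Real.sin (x / 2) ^ 2 -
        (x - Real.sin x) * (2 * Real.sin (x / 2) ^ 1 * (Real.cos (x / 2) * (1 / 2))))
        = Real.sin (x / 2) * hAux x := by
      rw [cos_t_eq x]
      simp only [hAux]
      ring
    rw [key]
    have hh := hAux_pos hx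
    positivity
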